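/- If h : [0,1] → ℝ is concave on [0,1), increasing, with h(0)=0 and h(1)=1, and h is nonnegative, then h can be written as h = λ·h̃ + (1-λ)·δ for some λ ∈ [0,1], where h̃ is concave on all of [0,1] with h̃(0)=0, h̃(1)=1, increasing, and δ(t) = 1 if t = 1 and 0 otherwise. -/

import Mathlib

open Set

private lemma combo_lt_one {x y a b : ℝ} (hx : x < 1) (hy : y < 1)
    (ha : 0 ≤ a) (hb : 0 ≤ b) (hab : a + b = 1) : a * x + b * y < 1 := by
  rcases eq_or_lt_of_le ha with h | h
  · have hb1 : b = 1 := by linarith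
    simp [← h, hb1]; linarith
  · nlinarith

theorem stmt_0 (h : ℝ → ℝ)
    (hconc : ConcaveOn ℝ (Set.Ico (0:ℝ) 1) h)
    (hmono : MonotoneOn h (Set.Icc (0:ℝ) 1))
    (h0 : h 0 = 0) (h1 : h 1 = 1)
    (hnonneg : ∀ t ∈ Set.Icc (0:ℝ) 1, 0 ≤ h t) :
    ∃ l ∈ Set.Icc (0:ℝ) 1, ∃ htil : ℝ → ℝ,
      ConcaveOn ℝ (Set.Icc (0:ℝ) 1) htil ∧
      MonotoneOn htil (Set.Icc (0:ℝ) 1) ∧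
      htil 0 = 0 ∧ htil 1 = 1 ∧
      ∀ t ∈ Set.Icc (0:ℝ) 1,
        h t = l * htil t + (1 - l) * (if t = 1 then 1 else 0) := by
  set S := h '' Set.Ico (0:ℝ) 1 with hS
  have h0m : (0:ℝ) ∈ Set.Ico (0:ℝ) 1 := by norm_num
  have h1m : (1:ℝ) ∈ Set.Icc (0:ℝ) 1 := by norm_num
  have hSne : S.Nonempty := ⟨h 0, 0, h0m, rfl⟩
  have hub : ∀ u ∈ S, u ≤ 1 := by
    rintro u ⟨t, ht, rfl⟩
    have := hmono (Set.mem_Icc.mpr ⟨ht.1, ht.2.le⟩) h1m ht.2.le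
    linarith
  have hSbdd : BddAbove S := ⟨1, hub⟩
  set l := sSup S with hl
  have hle : ∀ t ∈ Set.Ico (0:ℝ) 1, h t ≤ l := fun t ht => le_csSup hSbdd ⟨t, ht, rfl⟩
  have hl0 : 0 ≤ l := by have := hle 0 h0m; linarith
  have hl1 : l ≤ 1 := csSup_le hSne hub
  rcases eq_or_lt_of_le hl0 with hl0' | hlpos
  · -- l = 0 : h is the indicator δ; take htil = id
    refine ⟨0, by norm_num, id, concaveOn_id (convex_Icc 0 1), fun _ _ _ _ hxy => hxy,
      rfl, rfl, ?_⟩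
    intro t ht
    by_cases ht1 : t = 1
    · simp [ht1, h1]
    · have ht' : t ∈ Set.Ico (0:ℝ) 1 := ⟨ht.1, lt_of_le_of_ne ht.2 ht1⟩
      have : h t = 0 := le_antisymm (by have := hle t ht'; linarith) (hnonneg t ht)
      simp [ht1, this]
  · -- l > 0
    set htil : ℝ → ℝ := fun t => if t = 1 then 1 else h t / l with hhtil
    have htil_le_one : ∀ t ∈ Set.Icc (0:ℝ) 1, htil t ≤ 1 := by
      intro t ht
      by_cases ht1 : t = 1
      · simp [hhtil, ht1]
      · have ht' : t ∈ Set.Ico (0:ℝ) 1 := ⟨ht.1, lt_of_le_of_ne ht.2 ht1⟩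
        simp only [hhtil, if_neg ht1]
        exact (div_le_one hlpos).mpr (hle t ht')
    have hkey : ∀ x ∈ Set.Ico (0:ℝ) 1, ∀ a b : ℝ, 0 ≤ a → 0 < b → a + b = 1 →
        a * x + b < 1 → a * h x + b * l ≤ h (a * x + b) := by
      intro x hx a b ha hb hab hz
      have hzm : a * x + b ∈ Set.Icc (0:ℝ) 1 :=
        ⟨by nlinarith [hx.1], hz.le⟩
      have hbound : ∀ u ∈ S, u ≤ (h (a * x + b) - a * h x) / b := by
        rintro u ⟨y, hy, rfl⟩
        have hcomb := hconc.2 hx hy ha hb.le hab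
        simp only [smul_eq_mul] at hcomb
        have hcm : a * x + b * y ∈ Set.Ico (0:ℝ) 1 :=
          ⟨by nlinarith [hx.1, hy.1], combo_lt_one hx.2 hy.2 ha hb.le hab⟩
        have hmle : h (a * x + b * y) ≤ h (a * x + b) :=
          hmono ⟨hcm.1, hcm.2.le⟩ hzm (by nlinarith [hy.2.le])
        rw [le_div_iff₀ hb]
        nlinarith
      have : l ≤ (h (a * x + b) - a * h x) / b := csSup_le hSne hbound
      rw [le_div_iff₀ hb] at this
      nlinarith
    have hconc' : ConcaveOn ℝ (Set.Icc (0:ℝ) 1) htil := by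
      constructor
      · exact convex_Icc 0 1
      · have haux : ∀ x ∈ Set.Icc (0:ℝ) 1, ∀ a b : ℝ, 0 ≤ a → 0 ≤ b → a + b = 1 →
            a * htil x + b * htil 1 ≤ htil (a * x + b * 1) := by
          intro x hx a b ha hb hab
          have h1' : htil 1 = 1 := by simp [hhtil]
          simp only [h1', mul_one]
          by_cases hx1 : x = 1
          · subst hx1
            rw [show a * 1 + b = (1:ℝ) by linarith, h1']
            nlinarith
          · have hx' : x ∈ Set.Ico (0:ℝ) 1 := ⟨hx.1, lt_of_le_of_ne hx.2 hx1⟩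
            rcases eq_or_lt_of_le hb with hb0 | hbpos
            · have ha1 : a = 1 := by linarith
              simp [← hb0, ha1]
            · by_cases hz1 : a * x + b = 1
              · have ha0 : a = 0 := by nlinarith [hx'.2]
                have hb1 : b = 1 := by linarith
                rw [hz1, h1', ha0, hb1]
                have := hnonneg x ⟨hx.1, hx.2⟩
                have hnn : 0 ≤ htil x := by
                  simp only [hhtil, if_neg hx1]
                  positivity
                nlinarith
              · have hzlt : a * x + b < 1 :=
                  lt_of_le_of_ne (by nlinarith [hx'.2.le]) hz1
                simp only [hhtil, if_neg hz1, if_neg hx1]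
                have hk := hkey x hx' a b ha hbpos hab hzlt
                have heq : a * (h x / l) + b = (a * h x + b * l) / l := by
                  field_simp
                rw [heq, div_le_div_iff₀ hlpos hlpos]
                nlinarith
        intro x hx y hy a b ha hb hab
        simp only [smul_eq_mul]
        by_cases hy1 : y = 1
        · subst hy1; exact haux x hx a b ha hb hab
        · by_cases hx1 : x = 1
          · subst hx1
            have := haux y hy b a hb ha (by linarith)
            calc a * htil 1 + b * htil y = b * htil y + a * htil 1 := by ring
              _ ≤ htil (b * y + a * 1) := this
              _ = htil (a * 1 + b * y) := by ring_nf
          · have hx' : x ∈ Set.Ico (0:ℝ) 1 := ⟨hx.1, lt_of_le_of_ne hx.2 hx1⟩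
            have hy' : y ∈ Set.Ico (0:ℝ) 1 := ⟨hy.1, lt_of_le_of_ne hy.2 hy1⟩
            have hz1 : a * x + b * y ≠ 1 := ne_of_lt (combo_lt_one hx'.2 hy'.2 ha hb hab)
            simp only [hhtil, if_neg hx1, if_neg hy1, if_neg hz1]
            have hcomb := hconc.2 hx' hy' ha hb hab
            simp only [smul_eq_mul] at hcomb
            have heq : a * (h x / l) + b * (h y / l) = (a * h x + b * h y) / l := by
              field_simp
            rw [heq, div_le_div_iff₀ hlpos hlpos]
            nlinarith
    have hmono' : MonotoneOn htil (Set.Icc (0:ℝ) 1) := by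
      intro x hx y hy hxy
      by_cases hy1 : y = 1
      · subst hy1
        have := htil_le_one x hx
        simpa [hhtil] using this
      · have hy' : y ∈ Set.Ico (0:ℝ) 1 := ⟨hy.1, lt_of_le_of_ne hy.2 hy1⟩
        have hx1 : x ≠ 1 := by rintro rfl; exact hy1 (le_antisymm hy.2 hxy)
        simp only [hhtil, if_neg hx1, if_neg hy1]
        have : h x ≤ h y := hmono ⟨hx.1, hx.2⟩ ⟨hy.1, hy.2⟩ hxy
        gcongr
    refine ⟨l, ⟨hl0, hl1⟩, htil, hconc', hmono', ?_, by simp [hhtil], ?_⟩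
    · simp [hhtil, h0]
    · intro t ht
      by_cases ht1 : t = 1
      · simp [ht1, h1, hhtil]
      · simp only [hhtil, if_neg ht1]
        field_simp
        ring
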